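/- For every integer N ≥ 3 and α ∈ (0,1), the limit as T → ∞ of (∫₀^T e^{N t^α} dt) / (∫₀^T e^{2 t^α} dt)^{N/2} equals 0. -/

import Mathlib

open MeasureTheory Filter Real

/-- Tangent-line bound for the concave function `t ↦ t ^ α` at base point `b`. -/
lemma tangent_rpow_le {α b t : ℝ} (hb : 0 < b) (ht : 0 ≤ t) (h0 : 0 ≤ α) (h1 : α ≤ 1) :
    t ^ α ≤ b ^ α + α * b ^ (α - 1) * (t - b) := by
  set s : ℝ := (t - b) / b with hs_def
  have hs : -1 ≤ s := by
    rw [hs_def, le_div_iff₀ hb]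
    linarith
  have key : (1 + s) ^ α ≤ 1 + α * s := rpow_one_add_le_one_add_mul_self hs h0 h1
  have ht_eq : t = b * (1 + s) := by
    rw [hs_def, mul_add, mul_one, mul_div_assoc', mul_comm b (t-b), mul_div_assoc, div_self hb.ne', mul_one]; ring
  have h1s : 0 ≤ 1 + s := by linarith
  calc t ^ α = (b * (1 + s)) ^ α := by rw [← ht_eq]
    _ = b ^ α * (1 + s) ^ α := Real.mul_rpow hb.le h1s
    _ ≤ b ^ α * (1 + α * s) := by
        apply mul_le_mul_of_nonneg_left key (Real.rpow_nonneg hb.le α)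
    _ = b ^ α + α * (b ^ α / b) * (t - b) := by
        rw [hs_def]; field_simp
    _ = b ^ α + α * b ^ (α - 1) * (t - b) := by
        rw [Real.rpow_sub_one hb.ne']

/-- continuity of `t ↦ exp (k * t ^ α)` for `0 < α`. -/
lemma cont_exp_rpow (k α : ℝ) (h0 : 0 < α) :
    Continuous (fun t : ℝ => Real.exp (k * t ^ α)) := by
  apply Real.continuous_exp.comp
  apply Continuous.mul continuous_const
  rw [continuous_iff_continuousAt]
  intro x
  exact Real.continuousAt_rpow_const x α (Or.inr h0.le)

/-- For every integer `N ≥ 3` and `α ∈ (0,1)`,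
`(∫₀^T e^{N t^α} dt) / (∫₀^T e^{2 t^α} dt)^{N/2} → 0` as `T → ∞`. -/
theorem ratio_exp_rpow_tendsto_zero (N : ℕ) (hN : 3 ≤ N) (α : ℝ) (h0 : 0 < α) (h1 : α < 1) :
    Filter.Tendsto
      (fun T : ℝ =>
        (∫ t in Set.Icc (0:ℝ) T, Real.exp (N * t ^ α)) /
          (∫ t in Set.Icc (0:ℝ) T, Real.exp (2 * t ^ α)) ^ ((N : ℝ) / 2))
      Filter.atTop (nhds 0) := by
  have hNR : (3:ℝ) ≤ (N:ℝ) := by exact_mod_cast hN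
  have hNpos : (0:ℝ) < (N:ℝ) := by linarith
  set p : ℝ := (N:ℝ) / 2 with hp_def
  have hp1 : (1:ℝ) < p := by rw [hp_def]; linarith
  set β : ℝ := (1 - α) * (p - 1) with hβ_def
  have hβpos : 0 < β := mul_pos (by linarith) (by linarith)
  set C : ℝ := Real.exp (2 * N) * ((N:ℝ) * α)⁻¹ with hC_def
  have hCpos : 0 < C := mul_pos (Real.exp_pos _) (inv_pos.mpr (mul_pos hNpos h0))
  -- the dominating function
  have hg : Tendsto (fun T : ℝ => C * T ^ (-β)) atTop (nhds 0) := by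
    have := (tendsto_rpow_neg_atTop hβpos).const_mul C
    simpa using this
  apply tendsto_of_tendsto_of_tendsto_of_le_of_le' tendsto_const_nhds hg
  · -- nonnegativity of the ratio
    filter_upwards with T
    apply div_nonneg
    · exact setIntegral_nonneg measurableSet_Icc (fun t _ => (Real.exp_pos _).le)
    · exact Real.rpow_nonneg
        (setIntegral_nonneg measurableSet_Icc (fun t _ => (Real.exp_pos _).le)) _
  · -- the main bound, for T ≥ max 1 (2 ^ α⁻¹)
    filter_upwards [eventually_ge_atTop (max 1 (2 ^ α⁻¹ : ℝ))] with T hT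
    have hT1 : (1:ℝ) ≤ T := le_trans (le_max_left _ _) hT
    have hTpos : (0:ℝ) < T := lt_of_lt_of_le one_pos hT1
    have hTα2 : (2:ℝ) ≤ T ^ α := by
      have h2 : (2:ℝ) ^ α⁻¹ ≤ T := le_trans (le_max_right _ _) hT
      calc (2:ℝ) = ((2:ℝ) ^ α⁻¹) ^ α := by
            rw [← Real.rpow_mul (by norm_num), inv_mul_cancel₀ h0.ne', Real.rpow_one]
        _ ≤ T ^ α := Real.rpow_le_rpow (Real.rpow_nonneg (by norm_num) _) h2 h0.le
    have hTαpos : (0:ℝ) < T ^ α := by linarith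
    set δ : ℝ := T ^ (1 - α) with hδ_def
    have hδ_eq : δ = T / T ^ α := by
      rw [hδ_def, Real.rpow_sub hTpos, Real.rpow_one]
    have hδpos : 0 < δ := Real.rpow_pos_of_pos hTpos _
    have hδT2 : δ ≤ T / 2 := by
      rw [hδ_eq]
      exact div_le_div_of_nonneg_left hTpos.le (by norm_num) hTα2
    set b : ℝ := T - δ with hb_def
    have hbT2 : T / 2 ≤ b := by rw [hb_def]; linarith
    have hbpos : 0 < b := lt_of_lt_of_le (by linarith) hbT2
    have hbT : b ≤ T := by rw [hb_def]; linarith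
    -- key exponent bound : T^α - b^α ≤ 2
    have hexp_gap : T ^ α - b ^ α ≤ 2 := by
      have htan := tangent_rpow_le hbpos hTpos.le h0.le h1.le
      have hTb : T - b = δ := by rw [hb_def]; ring
      rw [hTb] at htan
      have hb_pow : b ^ (α - 1) ≤ (T / 2) ^ (α - 1) :=
        Real.rpow_le_rpow_of_nonpos (by linarith) hbT2 (by linarith)
      have hT2_pow : (T / 2) ^ (α - 1) = T ^ (α - 1) * 2 ^ (1 - α) := by
        rw [Real.div_rpow hTpos.le (by norm_num)]
        rw [div_eq_mul_inv, ← Real.rpow_neg (by norm_num)]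
        norm_num
      have h2pow : (2:ℝ) ^ (1 - α) ≤ 2 := by
        calc (2:ℝ) ^ (1 - α) ≤ 2 ^ (1:ℝ) :=
              Real.rpow_le_rpow_of_exponent_le (by norm_num) (by linarith)
          _ = 2 := Real.rpow_one 2
      have hTT : T ^ (α - 1) * δ = 1 := by
        rw [hδ_def, ← Real.rpow_add hTpos]
        norm_num
      have : α * b ^ (α - 1) * δ ≤ 2 := by
        calc α * b ^ (α - 1) * δ ≤ α * ((T / 2) ^ (α - 1)) * δ := by
              apply mul_le_mul_of_nonneg_right _ hδpos.le
              exact mul_le_mul_of_nonneg_left hb_pow h0.le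
          _ = (α * 2 ^ (1 - α)) * (T ^ (α - 1) * δ) := by rw [hT2_pow]; ring
          _ = α * 2 ^ (1 - α) := by rw [hTT, mul_one]
          _ ≤ 1 * 2 := by
              apply mul_le_mul h1.le h2pow (Real.rpow_nonneg (by norm_num) _) (by norm_num)
          _ = 2 := by norm_num
      linarith
    -- numerator upper bound
    set c : ℝ := (N:ℝ) * α * T ^ (α - 1) with hc_def
    have hcpos : 0 < c := mul_pos (mul_pos hNpos h0) (Real.rpow_pos_of_pos hTpos _)
    have hc_inv : c⁻¹ = ((N:ℝ) * α)⁻¹ * δ := by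
      rw [hc_def, mul_inv, hδ_def, ← Real.rpow_neg hTpos.le]
      norm_num
    have hnum : (∫ t in Set.Icc (0:ℝ) T, Real.exp (N * t ^ α))
        ≤ ((N:ℝ) * α)⁻¹ * δ * Real.exp ((N:ℝ) * T ^ α) := by
      have hint1 : IntegrableOn (fun t : ℝ => Real.exp ((N:ℝ) * t ^ α)) (Set.Icc 0 T) :=
        (cont_exp_rpow _ _ h0).integrableOn_Icc
      have hint2 : IntegrableOn
          (fun t : ℝ => Real.exp ((N:ℝ) * T ^ α + c * (t - T))) (Set.Icc 0 T) := by
        apply Continuous.integrableOn_Icc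
        exact Real.continuous_exp.comp (by continuity)
      have hmono : (∫ t in Set.Icc (0:ℝ) T, Real.exp (N * t ^ α))
          ≤ ∫ t in Set.Icc (0:ℝ) T, Real.exp ((N:ℝ) * T ^ α + c * (t - T)) := by
        apply setIntegral_mono_on hint1 hint2 measurableSet_Icc
        intro t ht
        apply Real.exp_le_exp.mpr
        have := tangent_rpow_le hTpos ht.1 h0.le h1.le (t := t)
        have h2 : (N:ℝ) * t ^ α ≤ (N:ℝ) * (T ^ α + α * T ^ (α - 1) * (t - T)) :=
          mul_le_mul_of_nonneg_left this hNpos.le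
        rw [hc_def]; ring_nf; ring_nf at h2; linarith
      have hcomp : (∫ t in Set.Icc (0:ℝ) T, Real.exp ((N:ℝ) * T ^ α + c * (t - T)))
          = Real.exp ((N:ℝ) * T ^ α - c * T) * (c⁻¹ * (Real.exp (c * T) - 1)) := by
        rw [MeasureTheory.integral_Icc_eq_integral_Ioc,
          ← intervalIntegral.integral_of_le hTpos.le]
        have : ∀ t : ℝ, Real.exp ((N:ℝ) * T ^ α + c * (t - T))
            = Real.exp ((N:ℝ) * T ^ α - c * T) * Real.exp (c * t) := by
          intro t
          rw [← Real.exp_add]; ring_nf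
        simp_rw [this]
        rw [intervalIntegral.integral_const_mul]
        congr 1
        have := intervalIntegral.integral_comp_mul_left (fun x => Real.exp x) hcpos.ne'
          (a := 0) (b := T)
        rw [this, integral_exp]
        simp [smul_eq_mul]
      have hle1 : Real.exp ((N:ℝ) * T ^ α - c * T) * (c⁻¹ * (Real.exp (c * T) - 1))
          ≤ c⁻¹ * Real.exp ((N:ℝ) * T ^ α) := by
        rw [Real.exp_sub]
        rw [div_mul_eq_mul_div]
        rw [div_le_iff₀ (Real.exp_pos _)]
        have h1' : Real.exp (c*T) - 1 ≤ Real.exp (c*T) := by linarith [Real.exp_pos (c*T)]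
        calc Real.exp ((N:ℝ) * T ^ α) * (c⁻¹ * (Real.exp (c * T) - 1))
            ≤ Real.exp ((N:ℝ) * T ^ α) * (c⁻¹ * Real.exp (c * T)) := by
              apply mul_le_mul_of_nonneg_left _ (Real.exp_pos _).le
              exact mul_le_mul_of_nonneg_left h1' (inv_pos.mpr hcpos).le
          _ = c⁻¹ * Real.exp ((N:ℝ) * T ^ α) * Real.exp (c * T) := by ring
      calc (∫ t in Set.Icc (0:ℝ) T, Real.exp (N * t ^ α)) ≤ _ := hmono
        _ = Real.exp ((N:ℝ) * T ^ α - c * T) * (c⁻¹ * (Real.exp (c * T) - 1)) := hcomp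
        _ ≤ c⁻¹ * Real.exp ((N:ℝ) * T ^ α) := hle1
        _ = ((N:ℝ) * α)⁻¹ * δ * Real.exp ((N:ℝ) * T ^ α) := by rw [hc_inv]
    -- denominator lower bound
    have hden : δ * Real.exp (2 * b ^ α) ≤ ∫ t in Set.Icc (0:ℝ) T, Real.exp (2 * t ^ α) := by
      have hint : IntegrableOn (fun t : ℝ => Real.exp (2 * t ^ α)) (Set.Icc 0 T) :=
        (cont_exp_rpow _ _ h0).integrableOn_Icc
      have hsub : Set.Icc b T ⊆ Set.Icc (0:ℝ) T := Set.Icc_subset_Icc hbpos.le le_rfl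
      have hstep1 : (∫ t in Set.Icc b T, Real.exp (2 * t ^ α))
          ≤ ∫ t in Set.Icc (0:ℝ) T, Real.exp (2 * t ^ α) := by
        apply setIntegral_mono_set hint
        · filter_upwards with t using (Real.exp_pos _).le
        · exact Filter.Eventually.of_forall hsub
      have hstep2 : Real.exp (2 * b ^ α) * (volume (Set.Icc b T)).toReal
          ≤ ∫ t in Set.Icc b T, Real.exp (2 * t ^ α) := by
        rw [mul_comm, ← smul_eq_mul, ← measureReal_def]
        apply setIntegral_ge_of_const_le measurableSet_Icc
        · rw [Real.volume_Icc]; exact ENNReal.ofReal_ne_top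
        · intro t ht
          apply Real.exp_le_exp.mpr
          apply mul_le_mul_of_nonneg_left _ (by norm_num : (0:ℝ) ≤ 2)
          exact Real.rpow_le_rpow hbpos.le ht.1 h0.le
        · exact hint.mono_set hsub
      have hvol : (volume (Set.Icc b T)).toReal = δ := by
        rw [Real.volume_Icc, ENNReal.toReal_ofReal (by linarith)]
        rw [hb_def]; ring
      rw [hvol] at hstep2
      calc δ * Real.exp (2 * b ^ α) = Real.exp (2 * b ^ α) * δ := by ring
        _ ≤ _ := hstep2
        _ ≤ _ := hstep1
    -- combine
    have hden_pos : 0 < ∫ t in Set.Icc (0:ℝ) T, Real.exp (2 * t ^ α) :=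
      lt_of_lt_of_le (mul_pos hδpos (Real.exp_pos _)) hden
    have hBpos : 0 < (δ * Real.exp (2 * b ^ α)) ^ p :=
      Real.rpow_pos_of_pos (mul_pos hδpos (Real.exp_pos _)) _
    have hden_pow : (δ * Real.exp (2 * b ^ α)) ^ p
        ≤ (∫ t in Set.Icc (0:ℝ) T, Real.exp (2 * t ^ α)) ^ p :=
      Real.rpow_le_rpow (mul_pos hδpos (Real.exp_pos _)).le hden (by linarith)
    have hratio : (∫ t in Set.Icc (0:ℝ) T, Real.exp (N * t ^ α)) /
          (∫ t in Set.Icc (0:ℝ) T, Real.exp (2 * t ^ α)) ^ p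
        ≤ (((N:ℝ) * α)⁻¹ * δ * Real.exp ((N:ℝ) * T ^ α)) /
          ((δ * Real.exp (2 * b ^ α)) ^ p) := by
      apply div_le_div₀ _ hnum hBpos hden_pow
      positivity
    -- simplify RHS
    have hBval : (δ * Real.exp (2 * b ^ α)) ^ p = δ ^ p * Real.exp ((N:ℝ) * b ^ α) := by
      rw [Real.mul_rpow hδpos.le (Real.exp_pos _).le]
      congr 1
      rw [← Real.exp_mul]
      congr 1
      rw [hp_def]; ring
    have hδp : δ ^ p = T ^ ((1 - α) * p) := by
      rw [hδ_def, ← Real.rpow_mul hTpos.le]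
    have hfinal : (((N:ℝ) * α)⁻¹ * δ * Real.exp ((N:ℝ) * T ^ α)) /
          ((δ * Real.exp (2 * b ^ α)) ^ p) ≤ C * T ^ (-β) := by
      rw [hBval, hδp, hδ_def]
      have hTratio : T ^ (1 - α) / T ^ ((1 - α) * p) = T ^ (-β) := by
        rw [← Real.rpow_sub hTpos, hβ_def]
        congr 1; ring
      have hexp_ratio : Real.exp ((N:ℝ) * T ^ α) / Real.exp ((N:ℝ) * b ^ α)
          ≤ Real.exp (2 * N) := by
        rw [← Real.exp_sub, Real.exp_le_exp]
        have : (N:ℝ) * T ^ α - (N:ℝ) * b ^ α = (N:ℝ) * (T ^ α - b ^ α) := by ring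
        rw [this]
        calc (N:ℝ) * (T ^ α - b ^ α) ≤ (N:ℝ) * 2 :=
              mul_le_mul_of_nonneg_left hexp_gap hNpos.le
          _ = 2 * N := by ring
      have heq : (((N:ℝ) * α)⁻¹ * T ^ (1 - α) * Real.exp ((N:ℝ) * T ^ α)) /
            (T ^ ((1 - α) * p) * Real.exp ((N:ℝ) * b ^ α))
          = ((N:ℝ) * α)⁻¹ * (T ^ (1 - α) / T ^ ((1 - α) * p)) *
            (Real.exp ((N:ℝ) * T ^ α) / Real.exp ((N:ℝ) * b ^ α)) := by
        field_simp
      rw [heq, hTratio]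
      rw [hC_def]
      calc ((N:ℝ) * α)⁻¹ * T ^ (-β) *
            (Real.exp ((N:ℝ) * T ^ α) / Real.exp ((N:ℝ) * b ^ α))
          ≤ ((N:ℝ) * α)⁻¹ * T ^ (-β) * Real.exp (2 * N) := by
            apply mul_le_mul_of_nonneg_left hexp_ratio
            positivity
        _ = Real.exp (2 * N) * ((N:ℝ) * α)⁻¹ * T ^ (-β) := by ring
    calc (∫ t in Set.Icc (0:ℝ) T, Real.exp (N * t ^ α)) /
          (∫ t in Set.Icc (0:ℝ) T, Real.exp (2 * t ^ α)) ^ ((N:ℝ)/2)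
        ≤ _ := hratio
      _ ≤ C * T ^ (-β) := hfinal
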